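/- Let h : ℝ^{n-1} × [0,1] → ℝ be a C² function solving the linear backward heat equation h_t + Tr(A∇²h) = 0 on ℝ^{n-1} × (0,1), where A = (1/2^{d+1}) Σ_{m∈ℬ^d} r(m)⊗r(m) and r(m) = (q₁(m)−qₙ(m),…,q_{n-1}(m)−qₙ(m)). Define u(x,t) = h(x₁−xₙ,…,x_{n-1}−xₙ, t) + (x₁+⋯+xₙ)/n. Then: (a) ⟨∇u(x,t), 𝟙⟩ = 1 for all (x,t); (b) ∇²u(x,t)𝟙 = 0; (c) ⟨∇²u(x,t) q(m), q(m)⟩ = ⟨∇²h(y,t) r(m), r(m)⟩ with y = (x₁−xₙ,…,x_{n-1}−xₙ); and consequently (d) u satisfies u_t + (1/2^{d+1}) Σ_{m∈ℬ^d} ⟨∇²u q(m), q(m)⟩ = 0 on ℝⁿ × (0,1). -/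

import Mathlib

/-- Partial derivative of φ : ℝ^N → ℝ in coordinate i at y. -/
noncomputable def pderiv {N : ℕ} (φ : (Fin N → ℝ) → ℝ) (i : Fin N) (y : Fin N → ℝ) : ℝ :=
  deriv (fun s => φ (Function.update y i s)) (y i)

/-- Second partial derivative ∂ᵢ∂ⱼφ. -/
noncomputable def pderiv2 {N : ℕ} (φ : (Fin N → ℝ) → ℝ) (i j : Fin N) (y : Fin N → ℝ) : ℝ :=
  pderiv (fun z => pderiv φ j z) i y

/-- part of Theorem 5.7: if h is C² on ℝ^{n-1} × [0,1] and solves the linear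
backward heat equation h_t + Tr(A ∇²h) = 0 on ℝ^{n-1} × (0,1) with
A = (1/2^{d+1}) Σ_m r(m)⊗r(m), then u(x,t) = h(x₁−xₙ,…,x_{n-1}−xₙ,t) + (x₁+⋯+xₙ)/n
satisfies (a) ⟨∇u,𝟙⟩ = 1, (b) ∇²u 𝟙 = 0, (c) ⟨∇²u q(m),q(m)⟩ = ⟨∇²h r(m),r(m)⟩, and
(d) u_t + (1/2^{d+1}) Σ_m ⟨∇²u q(m),q(m)⟩ = 0 on ℝⁿ × (0,1).  (Paper n = our n+1.) -/
lemma pderiv_eq_fderiv {N : ℕ} {φ : (Fin N → ℝ) → ℝ} {D : (Fin N → ℝ) →L[ℝ] ℝ}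
    {y : Fin N → ℝ} (hφ : HasFDerivAt φ D y) (i : Fin N) :
    pderiv φ i y = D (Pi.single i 1) := by
  have hkey : ∀ s : ℝ, Function.update y i s = y + (s - y i) • (Pi.single i 1 : Fin N → ℝ) := by
    intro s; funext j
    by_cases hj : j = i
    · subst hj; simp
    · simp [Function.update_of_ne hj, Pi.single_eq_of_ne hj]
  have h1 : HasDerivAt (fun s : ℝ => y + (s - y i) • (Pi.single i 1 : Fin N → ℝ))
      (Pi.single i 1) (y i) := by
    have := (((hasDerivAt_id (y i)).sub_const (y i)).smul_const
      (Pi.single i 1 : Fin N → ℝ)).const_add y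
    simpa using this
  have h2 : HasDerivAt (fun s : ℝ => φ (Function.update y i s)) (D (Pi.single i 1)) (y i) := by
    have hy : y = y + ((y i) - y i) • (Pi.single i 1 : Fin N → ℝ) := by simp
    have := (hy ▸ hφ).comp_hasDerivAt (y i) h1
    simpa [← hkey, Function.comp_def] using this
  exact h2.deriv

lemma sum_bilinear {N M : ℕ} (B : (Fin N → ℝ) →L[ℝ] (Fin N → ℝ) →L[ℝ] ℝ)
    (c : Fin M → ℝ) (w : Fin M → Fin N → ℝ) :
    ∑ i, ∑ j, B (w i) (w j) * c i * c j = B (∑ i, c i • w i) (∑ j, c j • w j) := by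
  rw [map_sum]
  simp only [ContinuousLinearMap.coe_sum', Finset.sum_apply, map_sum, Finset.mul_sum]
  rw [Finset.sum_comm]
  refine Finset.sum_congr rfl fun i _ => Finset.sum_congr rfl fun j _ => ?_
  simp [ContinuousLinearMap.map_smul, ContinuousLinearMap.smul_apply]
  ring

lemma sum_single_smul {N : ℕ} (v : Fin N → ℝ) :
    ∑ i, v i • (Pi.single i 1 : Fin N → ℝ) = v := by
  funext j
  rw [Finset.sum_apply]
  simp [Pi.single_apply]

lemma key_lemma {ι κ : Type*} [Fintype ι] [Fintype κ] (c : ℝ) (P : κ → κ → ℝ)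
    (a : ι → κ → ℝ) :
    c * ∑ m : ι, ∑ i, ∑ j, P i j * a m i * a m j
      = ∑ i, ∑ j, (c * ∑ m : ι, a m i * a m j) * P i j := by
  simp only [Finset.mul_sum, Finset.sum_mul]
  conv_lhs => rw [Finset.sum_comm]
  refine Finset.sum_congr rfl fun i _ => ?_
  conv_lhs => rw [Finset.sum_comm]
  refine Finset.sum_congr rfl fun j _ => ?_
  refine Finset.sum_congr rfl fun m _ => ?_
  ring

theorem stmt15 {n d : ℕ} (hn : 1 ≤ n) (q : (Fin d → Bool) → Fin (n+1) → ℝ)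
    (hq : ∀ m i, q m i ∈ Set.Icc (-1:ℝ) 1)
    (h : (Fin n → ℝ) → ℝ → ℝ)
    (hsmooth : ContDiffOn ℝ 2 (fun p : (Fin n → ℝ) × ℝ => h p.1 p.2)
      (Set.univ ×ˢ Set.Icc 0 1))
    (hPDE : ∀ (y : Fin n → ℝ) (t : ℝ), t ∈ Set.Ioo (0:ℝ) 1 →
      deriv (fun τ => h y τ) t
        + ∑ i, ∑ j,
            ((1 / 2^(d+1)) * ∑ m : Fin d → Bool,
                (q m i.castSucc - q m (Fin.last n)) * (q m j.castSucc - q m (Fin.last n)))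
              * pderiv2 (fun w => h w t) i j y = 0)
    (u : (Fin (n+1) → ℝ) → ℝ → ℝ)
    (hu : ∀ (x : Fin (n+1) → ℝ) (t : ℝ),
      u x t = h (fun i => x i.castSucc - x (Fin.last n)) t + (∑ i, x i) / (n+1)) :
    ∀ (x : Fin (n+1) → ℝ) (t : ℝ), t ∈ Set.Ioo (0:ℝ) 1 →
      -- (a) ⟨∇u(x,t), 𝟙⟩ = 1
      (∑ i, pderiv (fun z => u z t) i x = 1) ∧
      -- (b) ∇²u(x,t) 𝟙 = 0
      (∀ i, ∑ j, pderiv2 (fun z => u z t) i j x = 0) ∧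
      -- (c) ⟨∇²u q(m), q(m)⟩ = ⟨∇²h r(m), r(m)⟩
      (∀ m : Fin d → Bool,
        ∑ i, ∑ j, pderiv2 (fun z => u z t) i j x * q m i * q m j
          = ∑ i : Fin n, ∑ j : Fin n,
              pderiv2 (fun w => h w t) i j (fun i => x i.castSucc - x (Fin.last n))
                * (q m i.castSucc - q m (Fin.last n)) * (q m j.castSucc - q m (Fin.last n))) ∧
      -- (d) u_t + (1/2^{d+1}) Σ_m ⟨∇²u q(m), q(m)⟩ = 0
      (deriv (fun τ => u x τ) t
        + (1 / 2^(d+1)) * ∑ m : Fin d → Bool,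
            ∑ i, ∑ j, pderiv2 (fun z => u z t) i j x * q m i * q m j = 0) := by
  intro x t ht
  -- smoothness of the time-slice
  have hG : ContDiff ℝ 2 (fun w => h w t) := by
    rw [contDiff_iff_contDiffAt]
    intro w
    have hmem : (Set.univ ×ˢ Set.Icc (0:ℝ) 1 : Set ((Fin n → ℝ) × ℝ)) ∈ nhds (w, t) :=
      prod_mem_nhds Filter.univ_mem (Icc_mem_nhds ht.1 ht.2)
    have h1 : ContDiffAt ℝ 2 (fun p : (Fin n → ℝ) × ℝ => h p.1 p.2) (w, t) :=
      hsmooth.contDiffAt hmem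
    exact h1.comp w (contDiffAt_id.prodMk contDiffAt_const)
  have hG1 : Differentiable ℝ (fun w => h w t) := hG.differentiable (by norm_num)
  set DG : (Fin n → ℝ) → (Fin n → ℝ) →L[ℝ] ℝ := fderiv ℝ (fun w => h w t) with hDGdef
  have hDG : ContDiff ℝ 1 DG := hG.fderiv_right (by norm_num)
  have hDG1 : Differentiable ℝ DG := hDG.differentiable (by norm_num)
  set D2 : (Fin n → ℝ) → (Fin n → ℝ) →L[ℝ] (Fin n → ℝ) →L[ℝ] ℝ := fderiv ℝ DG with hD2def
  -- the difference linear map L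
  set L : (Fin (n+1) → ℝ) →L[ℝ] (Fin n → ℝ) :=
    ContinuousLinearMap.pi (fun j : Fin n =>
      ContinuousLinearMap.proj (R := ℝ) (φ := fun _ : Fin (n+1) => ℝ) j.castSucc
      - ContinuousLinearMap.proj (Fin.last n)) with hLdef
  have hLapp : ∀ z : Fin (n+1) → ℝ, L z = fun j => z j.castSucc - z (Fin.last n) := by
    intro z; funext j; simp [hLdef]
  -- the average linear map
  set Sc : (Fin (n+1) → ℝ) →L[ℝ] ℝ :=
    ((n:ℝ)+1)⁻¹ • (∑ i, ContinuousLinearMap.proj (R := ℝ) (φ := fun _ : Fin (n+1) => ℝ) i)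
    with hScdef
  have hScapp : ∀ z : Fin (n+1) → ℝ, Sc z = (∑ i, z i) / ((n:ℝ)+1) := by
    intro z
    simp [hScdef, div_eq_inv_mul]
  have hU : (fun z => u z t) = fun z => (fun w => h w t) (L z) + Sc z := by
    funext z
    rw [hu, hLapp z, hScapp z]
  have hUD : ∀ z, HasFDerivAt (fun z => u z t) ((DG (L z)).comp L + Sc) z := by
    intro z
    rw [hU]
    exact ((hG1 (L z)).hasFDerivAt.comp z L.hasFDerivAt).add Sc.hasFDerivAt
  have hSsingle : ∀ i : Fin (n+1), Sc (Pi.single i 1) = ((n:ℝ)+1)⁻¹ := by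
    intro i
    rw [hScapp]
    simp [Pi.single_apply, div_eq_inv_mul]
  have hp1 : ∀ (z : Fin (n+1) → ℝ) (i), pderiv (fun z => u z t) i z
      = DG (L z) (L (Pi.single i 1)) + ((n:ℝ)+1)⁻¹ := by
    intro z i
    rw [pderiv_eq_fderiv (hUD z) i]
    simp [hSsingle]
  have hΦD : ∀ (v : Fin (n+1) → ℝ) (z),
      HasFDerivAt (fun z => DG (L z) (L v) + ((n:ℝ)+1)⁻¹)
        (((ContinuousLinearMap.apply ℝ ℝ (L v)).comp (D2 (L z))).comp L) z := by
    intro v z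
    have h3 : HasFDerivAt DG (D2 (L z)) (L z) := (hDG1 (L z)).hasFDerivAt
    have h4 := (((ContinuousLinearMap.apply ℝ ℝ (L v)).hasFDerivAt.comp (L z) h3).comp z
      L.hasFDerivAt).add_const (((n:ℝ)+1)⁻¹)
    simpa [Function.comp] using h4
  have hp2 : ∀ (i j : Fin (n+1)), pderiv2 (fun z => u z t) i j x
      = D2 (L x) (L (Pi.single i 1)) (L (Pi.single j 1)) := by
    intro i j
    unfold pderiv2
    have he : (fun z => pderiv (fun z => u z t) j z)
        = fun z => DG (L z) (L (Pi.single j 1)) + ((n:ℝ)+1)⁻¹ := funext fun z => hp1 z j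
    rw [he, pderiv_eq_fderiv (hΦD (Pi.single j 1) x) i]
    simp
  have hq2 : ∀ (i j : Fin n) (w : Fin n → ℝ), pderiv2 (fun w => h w t) i j w
      = D2 w (Pi.single i 1) (Pi.single j 1) := by
    intro i j w
    unfold pderiv2
    have he : (fun z => pderiv (fun w => h w t) j z)
        = fun z => (ContinuousLinearMap.apply ℝ ℝ ((Pi.single j 1 : Fin n → ℝ))) (DG z) := by
      funext z
      rw [pderiv_eq_fderiv (hG1 z).hasFDerivAt j]
      rfl
    have hD : HasFDerivAt
        (fun z => (ContinuousLinearMap.apply ℝ ℝ ((Pi.single j 1 : Fin n → ℝ))) (DG z))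
        ((ContinuousLinearMap.apply ℝ ℝ ((Pi.single j 1 : Fin n → ℝ))).comp (D2 w)) w := by
      have := (ContinuousLinearMap.apply ℝ ℝ
        ((Pi.single j 1 : Fin n → ℝ))).hasFDerivAt.comp w (hDG1 w).hasFDerivAt
      exact this
    rw [he, pderiv_eq_fderiv hD i]
    rfl
  -- key vector identities
  have hone : ∑ i : Fin (n+1), (Pi.single i 1 : Fin (n+1) → ℝ) = fun _ => 1 := by
    have := sum_single_smul (fun _ : Fin (n+1) => (1:ℝ))
    simpa using this
  have hL1 : L (fun _ => (1:ℝ)) = 0 := by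
    rw [hLapp]
    funext j; simp
  -- part (a)
  have parta : ∑ i, pderiv (fun z => u z t) i x = 1 := by
    simp only [hp1]
    rw [Finset.sum_add_distrib, ← map_sum, ← map_sum, hone, hL1]
    have hne : ((n:ℝ)+1) ≠ 0 := by positivity
    simp [Finset.sum_const, Finset.card_univ, hne]
  -- part (b)
  have partb : ∀ i, ∑ j, pderiv2 (fun z => u z t) i j x = 0 := by
    intro i
    simp only [hp2]
    rw [← map_sum, ← map_sum, hone, hL1]
    simp
  -- part (c)
  have partc : ∀ m : Fin d → Bool,
      ∑ i, ∑ j, pderiv2 (fun z => u z t) i j x * q m i * q m j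
        = ∑ i : Fin n, ∑ j : Fin n,
            pderiv2 (fun w => h w t) i j (fun i => x i.castSucc - x (Fin.last n))
              * (q m i.castSucc - q m (Fin.last n)) * (q m j.castSucc - q m (Fin.last n)) := by
    intro m
    simp only [hp2, hq2]
    rw [show (fun i => x i.castSucc - x (Fin.last n)) = L x from (hLapp x).symm]
    rw [sum_bilinear (D2 (L x)) (q m) (fun i => L (Pi.single i 1)),
        sum_bilinear (D2 (L x)) (fun i => q m i.castSucc - q m (Fin.last n))
          (fun i => Pi.single i 1)]
    have hvq : ∑ i, q m i • L (Pi.single i 1)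
        = ∑ i, (q m i.castSucc - q m (Fin.last n)) • (Pi.single i 1 : Fin n → ℝ) := by
      have lhs_eq : ∑ i, q m i • L (Pi.single i 1) = L (q m) := by
        simp only [← L.map_smul]
        rw [← map_sum, sum_single_smul]
      rw [lhs_eq, hLapp, sum_single_smul (fun i => q m i.castSucc - q m (Fin.last n))]
    rw [hvq]
  -- part (d)
  have partd : deriv (fun τ => u x τ) t
      + (1 / 2^(d+1)) * ∑ m : Fin d → Bool,
          ∑ i, ∑ j, pderiv2 (fun z => u z t) i j x * q m i * q m j = 0 := by
    have hut : (fun τ => u x τ)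
        = fun τ => h (fun i => x i.castSucc - x (Fin.last n)) τ + (∑ i, x i) / ((n:ℝ)+1) :=
      funext fun τ => hu x τ
    rw [hut, deriv_add_const]
    have hsum : ∑ m : Fin d → Bool, ∑ i, ∑ j,
          pderiv2 (fun z => u z t) i j x * q m i * q m j
        = ∑ m : Fin d → Bool, ∑ i : Fin n, ∑ j : Fin n,
            pderiv2 (fun w => h w t) i j (fun i => x i.castSucc - x (Fin.last n))
              * (q m i.castSucc - q m (Fin.last n)) * (q m j.castSucc - q m (Fin.last n)) :=
      Finset.sum_congr rfl fun m _ => partc m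
    rw [hsum]
    have hP := hPDE (fun i => x i.castSucc - x (Fin.last n)) t ht
    have key : (1 / 2^(d+1) : ℝ) * ∑ m : Fin d → Bool, ∑ i : Fin n, ∑ j : Fin n,
          pderiv2 (fun w => h w t) i j (fun i => x i.castSucc - x (Fin.last n))
            * (q m i.castSucc - q m (Fin.last n)) * (q m j.castSucc - q m (Fin.last n))
        = ∑ i : Fin n, ∑ j : Fin n,
            ((1 / 2^(d+1)) * ∑ m : Fin d → Bool,
                (q m i.castSucc - q m (Fin.last n)) * (q m j.castSucc - q m (Fin.last n)))
              * pderiv2 (fun w => h w t) i j (fun i => x i.castSucc - x (Fin.last n)) :=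
      key_lemma _ _ _
    rw [key]
    exact hP
  exact ⟨parta, partb, partc, partd⟩
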